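/- The function f(y) = (1/105)·cos⁴(y/2) satisfies the ordinary differential equation f' = (f²)⁽⁵⁾ + 25·(f²)''' + 144·(f²)' for all real y. -/

import Mathlib

open Real

private lemma hcos (k y : ℝ) :
    HasDerivAt (fun y : ℝ => Real.cos (k*y)) (-(k * Real.sin (k*y))) y := by
  have h := (Real.hasDerivAt_cos (k*y)).comp y ((hasDerivAt_id y).const_mul k)
  simpa [mul_comm, Function.comp_def] using h

private lemma hsin (k y : ℝ) :
    HasDerivAt (fun y : ℝ => Real.sin (k*y)) (k * Real.cos (k*y)) y := by
  have h := (Real.hasDerivAt_sin (k*y)).comp y ((hasDerivAt_id y).const_mul k)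
  simpa [mul_comm, Function.comp_def] using h

noncomputable def G0 : ℝ → ℝ := fun y =>
  (1/1411200) * (Real.cos (4*y) + 8 * Real.cos (3*y) + 28 * Real.cos (2*y) + 56 * Real.cos (1*y) + 35)
noncomputable def G1 : ℝ → ℝ := fun y =>
  (1/1411200) * (-(4 * Real.sin (4*y)) - 24 * Real.sin (3*y) - 56 * Real.sin (2*y) - 56 * Real.sin (1*y))
noncomputable def G2 : ℝ → ℝ := fun y =>
  (1/1411200) * (-(16 * Real.cos (4*y)) - 72 * Real.cos (3*y) - 112 * Real.cos (2*y) - 56 * Real.cos (1*y))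
noncomputable def G3 : ℝ → ℝ := fun y =>
  (1/1411200) * (64 * Real.sin (4*y) + 216 * Real.sin (3*y) + 224 * Real.sin (2*y) + 56 * Real.sin (1*y))
noncomputable def G4 : ℝ → ℝ := fun y =>
  (1/1411200) * (256 * Real.cos (4*y) + 648 * Real.cos (3*y) + 448 * Real.cos (2*y) + 56 * Real.cos (1*y))
noncomputable def G5 : ℝ → ℝ := fun y =>
  (1/1411200) * (-(1024 * Real.sin (4*y)) - 1944 * Real.sin (3*y) - 896 * Real.sin (2*y) - 56 * Real.sin (1*y))

private lemma e0 : (fun y : ℝ => ((1/105) * Real.cos (y/2) ^ 4) ^ 2) = G0 := by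
  funext y
  have c1 : Real.cos (1*y) = 2 * Real.cos (y/2) ^ 2 - 1 := by
    have := Real.cos_two_mul (y/2); rw [one_mul]
    have h2 : 2 * (y/2) = y := by ring
    rw [h2] at this; linarith
  have c2 : Real.cos (2*y) = 2 * Real.cos (1*y) ^ 2 - 1 := by
    have := Real.cos_two_mul (1*y)
    have h2 : 2 * (1*y) = 2*y := by ring
    rw [h2] at this; linarith
  have c3 : Real.cos (3*y) = 4 * Real.cos (1*y) ^ 3 - 3 * Real.cos (1*y) := by
    have := Real.cos_three_mul (1*y)
    have h2 : 3 * (1*y) = 3*y := by ring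
    rw [h2] at this; rw [this]
  have c4 : Real.cos (4*y) = 2 * Real.cos (2*y) ^ 2 - 1 := by
    have := Real.cos_two_mul (2*y)
    have h2 : 2 * (2*y) = 4*y := by ring
    rw [h2] at this; linarith
  simp only [G0]
  rw [c4, c3, c2, c1]; ring

private lemma e1 : deriv G0 = G1 := by
  funext y
  have h := ((((hcos 4 y).add ((hcos 3 y).const_mul 8)).add ((hcos 2 y).const_mul 28)).add
      ((hcos 1 y).const_mul 56)).add_const 35
  have h' := (h.const_mul (1/1411200 : ℝ)).deriv
  simp only [G0, G1]
  rw [show G0 = (fun y : ℝ => (1/1411200 : ℝ) * ((Real.cos (4*y) + 8 * Real.cos (3*y) + 28 * Real.cos (2*y) + 56 * Real.cos (1*y)) + 35)) from by funext z; simp only [G0]; try ring] at *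
  simp only [Pi.add_apply] at h'; rw [h']; ring

private lemma e2 : deriv G1 = G2 := by
  funext y
  have h := ((((hsin 4 y).const_mul (-4 : ℝ)).add ((hsin 3 y).const_mul (-24))).add
      ((hsin 2 y).const_mul (-56))).add ((hsin 1 y).const_mul (-56))
  have h' := (h.const_mul (1/1411200 : ℝ)).deriv
  rw [show G1 = (fun y : ℝ => (1/1411200 : ℝ) * ((-4 : ℝ) * Real.sin (4*y) + (-24) * Real.sin (3*y) + (-56) * Real.sin (2*y) + (-56) * Real.sin (1*y))) from by funext z; simp only [G1]; try ring]
  simp only [Pi.add_apply] at h'; rw [h']; simp only [G2]; ring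

private lemma e3 : deriv G2 = G3 := by
  funext y
  have h := ((((hcos 4 y).const_mul (-16 : ℝ)).add ((hcos 3 y).const_mul (-72))).add
      ((hcos 2 y).const_mul (-112))).add ((hcos 1 y).const_mul (-56))
  have h' := (h.const_mul (1/1411200 : ℝ)).deriv
  rw [show G2 = (fun y : ℝ => (1/1411200 : ℝ) * ((-16 : ℝ) * Real.cos (4*y) + (-72) * Real.cos (3*y) + (-112) * Real.cos (2*y) + (-56) * Real.cos (1*y))) from by funext z; simp only [G2]; try ring]
  simp only [Pi.add_apply] at h'; rw [h']; simp only [G3]; ring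

private lemma e4 : deriv G3 = G4 := by
  funext y
  have h := ((((hsin 4 y).const_mul (64 : ℝ)).add ((hsin 3 y).const_mul 216)).add
      ((hsin 2 y).const_mul 224)).add ((hsin 1 y).const_mul 56)
  have h' := (h.const_mul (1/1411200 : ℝ)).deriv
  rw [show G3 = (fun y : ℝ => (1/1411200 : ℝ) * ((64 : ℝ) * Real.sin (4*y) + 216 * Real.sin (3*y) + 224 * Real.sin (2*y) + 56 * Real.sin (1*y))) from by funext z; simp only [G3]; try ring]
  simp only [Pi.add_apply] at h'; rw [h']; simp only [G4]; ring

private lemma e5 : deriv G4 = G5 := by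
  funext y
  have h := ((((hcos 4 y).const_mul (256 : ℝ)).add ((hcos 3 y).const_mul 648)).add
      ((hcos 2 y).const_mul 448)).add ((hcos 1 y).const_mul 56)
  have h' := (h.const_mul (1/1411200 : ℝ)).deriv
  rw [show G4 = (fun y : ℝ => (1/1411200 : ℝ) * ((256 : ℝ) * Real.cos (4*y) + 648 * Real.cos (3*y) + 448 * Real.cos (2*y) + 56 * Real.cos (1*y))) from by funext z; simp only [G4]; try ring]
  simp only [Pi.add_apply] at h'; rw [h']; simp only [G5]; ring

private lemma lhs_deriv (y : ℝ) :
    deriv (fun y : ℝ => (1/105) * Real.cos (y/2) ^ 4) y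
      = (1/105) * (4 * Real.cos (y/2) ^ 3 * (-Real.sin (y/2) * (1/2))) := by
  have hc : HasDerivAt (fun y : ℝ => Real.cos (y/2)) (-Real.sin (y/2) * (1/2)) y := by
    have h := (Real.hasDerivAt_cos (y/2)).comp y ((hasDerivAt_id y).div_const 2)
    simpa [Function.comp_def] using h
  have h := ((hc.pow 4).const_mul (1/105 : ℝ)).deriv
  simpa using h

theorem quintic_compacton_identity :
    ∀ y : ℝ,
      deriv (fun y : ℝ => (1/105) * Real.cos (y/2) ^ 4) y
        = iteratedDeriv 5 (fun y : ℝ => ((1/105) * Real.cos (y/2) ^ 4) ^ 2) y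
          + 25 * iteratedDeriv 3 (fun y : ℝ => ((1/105) * Real.cos (y/2) ^ 4) ^ 2) y
          + 144 * deriv (fun y : ℝ => ((1/105) * Real.cos (y/2) ^ 4) ^ 2) y := by
  intro y
  have h5 : iteratedDeriv 5 (fun y : ℝ => ((1/105) * Real.cos (y/2) ^ 4) ^ 2) = G5 := by
    rw [e0, show (5:ℕ) = 0+1+1+1+1+1 from rfl]
    rw [iteratedDeriv_succ, iteratedDeriv_succ, iteratedDeriv_succ, iteratedDeriv_succ,
      iteratedDeriv_succ, iteratedDeriv_zero, e1, e2, e3, e4, e5]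
  have h3 : iteratedDeriv 3 (fun y : ℝ => ((1/105) * Real.cos (y/2) ^ 4) ^ 2) = G3 := by
    rw [e0, show (3:ℕ) = 0+1+1+1 from rfl]
    rw [iteratedDeriv_succ, iteratedDeriv_succ, iteratedDeriv_succ, iteratedDeriv_zero, e1, e2, e3]
  have h1 : deriv (fun y : ℝ => ((1/105) * Real.cos (y/2) ^ 4) ^ 2) = G1 := by
    rw [e0, e1]
  rw [h5, h3, h1, lhs_deriv]
  simp only [G1, G3, G5]
  have s1 : Real.sin (1*y) = 2 * Real.sin (y/2) * Real.cos (y/2) := by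
    have := Real.sin_two_mul (y/2)
    have h2 : 2 * (y/2) = 1*y := by ring
    rw [h2] at this; rw [this]
  have sc : Real.sin (2*y) = 2 * Real.sin (1*y) * Real.cos (1*y) := by
    have := Real.sin_two_mul (1*y)
    have h2 : 2 * (1*y) = 2*y := by ring
    rw [h2] at this; rw [this]
  have c1 : Real.cos (1*y) = 2 * Real.cos (y/2) ^ 2 - 1 := by
    have := Real.cos_two_mul (y/2)
    have h2 : 2 * (y/2) = 1*y := by ring
    rw [h2] at this; linarith
  rw [sc, s1, c1]; ring
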